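/- Let K be a field and p a positive integer with |K| > p. Let E be an n-dimensional vector space over K, and (E_i)_{i∈I} a family of (n-1)p+1 linear subspaces of E in which exactly p+1 subspaces have dimension n-1 and, for each k in {1,...,n-2}, exactly p subspaces have dimension k. Then E is not contained in the union of the E_i. -/

import Mathlib

lemma tele_sum (q M : ℕ) (hq : 1 ≤ q) :
    ∑ k ∈ Finset.Icc 1 M, (q^k - q^(k-1)) = q^M - 1 := by
  induction M with
  | zero => simp
  | succ M ih =>
    rw [← Finset.insert_Icc_right_eq_Icc_add_one (by omega), Finset.sum_insert (by simp), ih]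
    have h1 : q ^ M ≤ q ^ (M+1) := Nat.pow_le_pow_right hq (Nat.le_succ M)
    have h2 : 1 ≤ q ^ M := Nat.one_le_pow _ _ hq
    simp only [Nat.add_sub_cancel]
    omega

theorem stmt2 {K : Type*} [Field K] (p n : ℕ) (hp : 0 < p)
    (hK : (p : Cardinal) < Cardinal.mk K)
    (E : Type*) [AddCommGroup E] [Module K E] (hE : Module.finrank K E = n)
    (I : Type*) [Fintype I] (hI : Fintype.card I = (n - 1) * p + 1)
    (Es : I → Submodule K E)
    (htop : Nat.card {i : I // Module.finrank K (Es i) = n - 1} = p + 1)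
    (hk : ∀ k : ℕ, 1 ≤ k → k ≤ n - 2 →
      Nat.card {i : I // Module.finrank K (Es i) = k} = p) :
    ∃ x : E, ∀ i : I, x ∉ Es i := by
  classical
  set g : I → ℕ := fun i => Module.finrank K (Es i) with hg_def
  have hfib : ∀ k, (Finset.univ.filter fun i => g i = k).card = Nat.card {i : I // g i = k} := by
    intro k
    simp [Nat.card_eq_fintype_card, Fintype.card_subtype]
  -- n ≥ 2
  have hn2 : 2 ≤ n := by
    by_contra h
    have h1 : n - 1 = 0 := by omega
    have h2 : Nat.card {i : I // g i = n - 1} ≤ Fintype.card I := by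
      rw [Nat.card_eq_fintype_card]; exact Fintype.card_subtype_le _
    rw [htop, hI, h1] at h2
    omega
  obtain ⟨m, rfl⟩ : ∃ m, n = m + 2 := ⟨n - 2, by omega⟩
  have htop' : Nat.card {i : I // g i = m + 1} = p + 1 := htop
  have hI' : Fintype.card I = (m + 1) * p + 1 := hI
  have hk' : ∀ k : ℕ, 1 ≤ k → k ≤ m → Nat.card {i : I // g i = k} = p := hk
  have hE' : Module.finrank K E = m + 2 := hE
  have hfd : FiniteDimensional K E := Module.finite_of_finrank_eq_succ hE'
  -- fibers partition
  set fib : ℕ → Finset I := fun k => Finset.univ.filter fun i => g i = k with hfib_def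
  have hfibtop : (fib (m+1)).card = p + 1 := by rw [hfib_def]; rw [hfib]; exact htop'
  have hfibk : ∀ k, 1 ≤ k → k ≤ m → (fib k).card = p := by
    intro k h1 h2; rw [hfib_def]; rw [hfib]; exact hk' k h1 h2
  have hdisj : ∀ x ∈ Finset.Icc 1 (m+1), ∀ y ∈ Finset.Icc 1 (m+1), x ≠ y →
      Disjoint (fib x) (fib y) := by
    intro x _ y _ hxy
    simp only [Finset.disjoint_left, hfib_def, Finset.mem_filter]
    rintro a ⟨_, rfl⟩ ⟨_, h⟩
    exact hxy h
  have hcard_small : ∑ k ∈ Finset.Icc 1 m, (fib k).card = m * p := by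
    have e : ∑ k ∈ Finset.Icc 1 m, (fib k).card = ∑ _k ∈ Finset.Icc 1 m, p :=
      Finset.sum_congr rfl (fun k hk2 => by
        rw [Finset.mem_Icc] at hk2; exact hfibk k hk2.1 hk2.2)
    rw [e, Finset.sum_const, smul_eq_mul, Nat.card_Icc]
    norm_num
  have hcardsum : ∑ k ∈ Finset.Icc 1 (m+1), (fib k).card = (m+1) * p + 1 := by
    rw [← Finset.insert_Icc_right_eq_Icc_add_one (by omega : 1 ≤ m + 1), Finset.sum_insert (by simp),
      hfibtop, hcard_small]
    ring
  have huniv : (Finset.Icc 1 (m+1)).biUnion fib = Finset.univ := by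
    apply Finset.eq_univ_of_card
    rw [Finset.card_biUnion hdisj, hcardsum, hI']
  have hgmem : ∀ i : I, 1 ≤ g i ∧ g i ≤ m + 1 := by
    intro i
    have hmem : i ∈ (Finset.Icc 1 (m+1)).biUnion fib := huniv ▸ Finset.mem_univ i
    rw [Finset.mem_biUnion] at hmem
    obtain ⟨k, hk1, hk2⟩ := hmem
    rw [hfib_def, Finset.mem_filter] at hk2
    rw [Finset.mem_Icc] at hk1
    omega
  by_contra hcon
  push_neg at hcon
  cases finite_or_infinite K with
  | inr hinf =>
    have hcov : ⋃ i, (Es i : Set E) = Set.univ := by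
      apply Set.eq_univ_of_forall
      intro x
      obtain ⟨i, hi⟩ := hcon x
      exact Set.mem_iUnion.2 ⟨i, hi⟩
    obtain ⟨i, hi⟩ := Subspace.exists_eq_top_of_iUnion_eq_univ hcov
    have h1 : g i = m + 2 := by
      show Module.finrank K (Es i) = m + 2
      rw [hi, finrank_top]
      exact hE' 
    have h2 := (hgmem i).2
    omega
  | inl hfin =>
    have : Fintype K := Fintype.ofFinite K
    set q := Fintype.card K with hq_def
    have hq : p < q := by
      rwa [Cardinal.mk_fintype, Nat.cast_lt] at hK
    have hq1 : 1 ≤ q := by omega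
    have : Finite E := Module.finite_of_finite K
    have : Fintype E := Fintype.ofFinite E
    -- choose i0 with g i0 = m+1
    obtain ⟨i0, hi0mem⟩ := Finset.card_pos.mp
      (by rw [hfibtop]; omega : 0 < (fib (m+1)).card)
    have hi0 : g i0 = m + 1 := by
      rw [hfib_def, Finset.mem_filter] at hi0mem; exact hi0mem.2
    set F : I → Finset E := fun i => (Es i : Set E).toFinset with hF_def
    have hsub : ∀ (S : Submodule K E), ((S : Set E).toFinset).card = q ^ Module.finrank K S := by
      intro S
      rw [Set.toFinset_card]
      exact Module.card_eq_pow_finrank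
    have hFcard : ∀ i, (F i).card = q ^ g i := fun i => hsub (Es i)
    -- intersection bound
    have hint : ∀ i, q ^ (g i - 1) ≤ (F i ∩ F i0).card := by
      intro i
      have hFeq : F i ∩ F i0 = ((Es i ⊓ Es i0 : Submodule K E) : Set E).toFinset := by
        rw [hF_def]
        simp [Set.toFinset_inter]
      rw [hFeq, hsub]
      apply Nat.pow_le_pow_right hq1
      have h1 : Module.finrank K ↥(Es i ⊔ Es i0) + Module.finrank K ↥(Es i ⊓ Es i0)
          = g i + g i0 := Submodule.finrank_sup_add_finrank_inf_eq (Es i) (Es i0)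
      have h2 : Module.finrank K ↥(Es i ⊔ Es i0) ≤ m + 2 := hE' ▸ Submodule.finrank_le _
      omega
    have hdiff : ∀ i, (F i \ F i0).card ≤ q ^ g i - q ^ (g i - 1) := by
      intro i
      have h1 : (F i ∩ F i0).card + (F i \ F i0).card = (F i).card :=
        Finset.card_inter_add_card_sdiff (F i) (F i0)
      have h2 := hint i
      have h3 := hFcard i
      omega
    set Gs : I → Finset E := fun i => if i = i0 then F i0 else F i \ F i0 with hGs_def
    have hGuniv : Finset.univ.biUnion Gs = Finset.univ := by
      apply Finset.eq_univ_of_forall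
      intro x
      rw [Finset.mem_biUnion]
      by_cases hx0 : x ∈ F i0
      · exact ⟨i0, Finset.mem_univ _, by simp [hGs_def, hx0]⟩
      · obtain ⟨i, hi⟩ := hcon x
        have hxF : x ∈ F i := by rw [hF_def]; simpa using hi
        have hii0 : i ≠ i0 := by rintro rfl; exact hx0 hxF
        exact ⟨i, Finset.mem_univ _, by
          simp only [hGs_def, if_neg hii0, Finset.mem_sdiff]; exact ⟨hxF, hx0⟩⟩
    -- total sum fiberwise
    have hTfib : ∑ i : I, (q ^ g i - q ^ (g i - 1))
        = ∑ k ∈ Finset.Icc 1 (m+1), (fib k).card * (q ^ k - q ^ (k-1)) := by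
      rw [← Finset.sum_fiberwise_of_maps_to
        (fun i _ => Finset.mem_Icc.mpr (hgmem i)) (fun i => q ^ g i - q ^ (g i - 1))]
      refine Finset.sum_congr rfl fun k _ => ?_
      have e : ∑ i ∈ fib k, (q ^ g i - q ^ (g i - 1))
          = ∑ _i ∈ fib k, (q ^ k - q ^ (k - 1)) :=
        Finset.sum_congr rfl (fun i hi => by
          have h2 : g i = k := (Finset.mem_filter.mp hi).2
          rw [h2])
      rw [e, Finset.sum_const, smul_eq_mul]
    have hsmall : ∑ k ∈ Finset.Icc 1 m, (fib k).card * (q ^ k - q ^ (k-1))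
        = p * (q ^ m - 1) := by
      have e : ∑ k ∈ Finset.Icc 1 m, (fib k).card * (q ^ k - q ^ (k-1))
          = ∑ k ∈ Finset.Icc 1 m, p * (q ^ k - q ^ (k-1)) :=
        Finset.sum_congr rfl (fun k hk2 => by
          rw [Finset.mem_Icc] at hk2; rw [hfibk k hk2.1 hk2.2])
      rw [e, ← Finset.mul_sum, tele_sum q m hq1]
    have hT : ∑ i : I, (q ^ g i - q ^ (g i - 1))
        = (p+1) * (q ^ (m+1) - q ^ m) + p * (q ^ m - 1) := by
      rw [hTfib, ← Finset.insert_Icc_right_eq_Icc_add_one (by omega : 1 ≤ m + 1),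
        Finset.sum_insert (by simp), hfibtop, hsmall]
      simp only [Nat.add_sub_cancel]
    -- erase sum
    have herase : ∑ i ∈ Finset.univ.erase i0, (q ^ g i - q ^ (g i - 1))
        = p * (q ^ (m+1) - q ^ m) + p * (q ^ m - 1) := by
      have h1 := Finset.add_sum_erase Finset.univ
        (fun i => q ^ g i - q ^ (g i - 1)) (Finset.mem_univ i0)
      beta_reduce at h1
      rw [hi0, hT] at h1
      simp only [Nat.add_sub_cancel] at h1
      have : (p+1) * (q ^ (m+1) - q ^ m) = (q ^ (m+1) - q ^ m) + p * (q ^ (m+1) - q ^ m) := by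
        ring
      omega
    -- final bound
    have hGcard0 : (Gs i0).card = q ^ (m+1) := by
      show (if i0 = i0 then F i0 else F i0 \ F i0).card = q ^ (m+1)
      rw [if_pos rfl, hFcard i0, hi0]
    have hsumG : ∑ i : I, (Gs i).card
        ≤ q ^ (m+1) + (p * (q ^ (m+1) - q ^ m) + p * (q ^ m - 1)) := by
      rw [← Finset.add_sum_erase Finset.univ _ (Finset.mem_univ i0), hGcard0, ← herase]
      refine add_le_add_right (Finset.sum_le_sum fun i hi => ?_) _
      rw [Finset.mem_erase] at hi
      show (if i = i0 then F i0 else F i \ F i0).card ≤ q ^ g i - q ^ (g i - 1)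
      rw [if_neg hi.1]
      exact hdiff i
    have hbig : (Finset.univ : Finset E).card ≤ ∑ i : I, (Gs i).card := by
      rw [← hGuniv]
      exact Finset.card_biUnion_le
    have hcardE : (Finset.univ : Finset E).card = q ^ (m+2) := by
      rw [Finset.card_univ, Module.card_eq_pow_finrank (K := K), hE']
    -- arithmetic contradiction
    have ha : 1 ≤ q ^ m := Nat.one_le_pow _ _ hq1
    have hab : q ^ m ≤ q ^ (m+1) := Nat.pow_le_pow_right hq1 (by omega)
    have hbc : (p+1) * q ^ (m+1) ≤ q ^ (m+2) := by
      have : q ^ (m+2) = q * q ^ (m+1) := by ring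
      rw [this]
      exact Nat.mul_le_mul_right _ (by omega)
    have hlt : q ^ (m+1) + (p * (q ^ (m+1) - q ^ m) + p * (q ^ m - 1)) < (p+1) * q ^ (m+1) := by
      have e1 : p * (q ^ (m+1) - q ^ m) + p * (q ^ m - 1) = p * (q ^ (m+1) - 1) := by
        rw [← Nat.mul_add]
        congr 1
        omega
      rw [e1]
      have e2 : p * (q ^ (m+1) - 1) < p * q ^ (m+1) := by
        have hx : q ^ (m+1) - 1 < q ^ (m+1) := by
          have : 1 ≤ q ^ (m+1) := Nat.one_le_pow _ _ hq1
          omega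
        exact mul_lt_mul_of_pos_left hx hp
      have e3 : (p+1) * q ^ (m+1) = q ^ (m+1) + p * q ^ (m+1) := by ring
      omega
    rw [hcardE] at hbig
    omega
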